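/- If p : X̃ → X is a covering map with X̃ a small loop space and p(x̃) = x, then p₋(π₁(X̃, x̃)) is a normal subgroup of π₁(X, x). -/

import Mathlib

open CategoryTheory Topology

attribute [local instance] Path.Homotopic.setoid

noncomputable section

variable {X Y E : Type*} [TopologicalSpace X] [TopologicalSpace Y] [TopologicalSpace E]

/-- Build an element of the fundamental group from a homotopy class of loops. -/
def fromLoop {x : X} (p : Path.Homotopic.Quotient x x) : FundamentalGroup X x :=
  FundamentalGroup.fromPath p

/-- The homotopy class of loops underlying an element of the fundamental group. -/
def toLoop {x : X} (γ : FundamentalGroup X x) : Path.Homotopic.Quotient x x :=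
  FundamentalGroup.toPath γ

/-- A fundamental group element is *small* if it has a loop representative inside every
neighborhood of the basepoint. -/
def IsSmall {x : X} (γ : FundamentalGroup X x) : Prop :=
  ∀ U ∈ nhds x, ∃ δ : Path x x, (∀ t, δ t ∈ U) ∧ fromLoop ⟦δ⟧ = γ

/-- The set of small loop classes, i.e. the carrier of the small loop group `π₁ˢ(X,x)`. -/
def smallSet (X : Type*) [TopologicalSpace X] (x : X) : Set (FundamentalGroup X x) :=
  {γ | IsSmall γ}

/-- Conjugate of a loop class at `y` by a path `α` from `x` to `y`: `α * β * α⁻¹`. -/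
def conjPath {x y : X} (α : Path x y) (β : FundamentalGroup X y) : FundamentalGroup X x :=
  fromLoop (Path.Homotopic.Quotient.trans
    (Path.Homotopic.Quotient.trans (⟦α⟧ : Path.Homotopic.Quotient x y) (toLoop β))
    (⟦α.symm⟧ : Path.Homotopic.Quotient y x))

/-- The SG subgroup `π₁ˢᵍ(X,x)`: generated by conjugates of small loop classes. -/
def sgSubgroup (X : Type*) [TopologicalSpace X] (x : X) : Subgroup (FundamentalGroup X x) :=
  Subgroup.closure {g | ∃ (y : X) (α : Path x y) (β : FundamentalGroup X y), IsSmall β ∧ g = conjPath α β}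

/-- The map induced on fundamental groups by a continuous map. -/
def piMap (f : C(X, Y)) (x : X) (γ : FundamentalGroup X x) : FundamentalGroup Y (f x) :=
  fromLoop (Path.Homotopic.Quotient.map (toLoop γ) f)

/-- A small loop space: a path-connected, non-simply connected space all of whose loops
are small. -/
def IsSmallLoopSpace (X : Type*) [TopologicalSpace X] : Prop :=
  PathConnectedSpace X ∧ ¬ SimplyConnectedSpace X ∧
    ∀ (x : X) (γ : FundamentalGroup X x), IsSmall γ

/-- A space is homotopically Hausdorff if every nontrivial loop class can be kept away from
some neighborhood of its basepoint. -/
def HomotopicallyHausdorff (X : Type*) [TopologicalSpace X] : Prop :=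
  ∀ (x : X) (γ : FundamentalGroup X x), γ ≠ 1 →
    ∃ U ∈ nhds x, ∀ δ : Path x x, (∀ t, δ t ∈ U) → fromLoop ⟦δ⟧ ≠ γ

/-- The image of `π₁(U,y) → π₁(X,y)`: classes of loops having a representative inside `U`. -/
def loopsIn (U : Set X) (y : X) : Set (FundamentalGroup X y) :=
  {γ | ∃ δ : Path y y, (∀ t, δ t ∈ U) ∧ fromLoop ⟦δ⟧ = γ}

/-- A semi-locally small loop space. -/
def SemiLocallySmallLoop (X : Type*) [TopologicalSpace X] : Prop :=
  ∀ x : X, ∃ U : Set X, IsOpen U ∧ x ∈ U ∧ ∀ y ∈ U, loopsIn U y = smallSet X y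


lemma toLoop_fromLoop {x : X} (q : Path.Homotopic.Quotient x x) : toLoop (fromLoop q) = q := rfl
lemma fromLoop_toLoop {x : X} (γ : FundamentalGroup X x) : fromLoop (toLoop γ) = γ :=
  rfl
lemma fromLoop_injective {x : X} : Function.Injective (fromLoop (x := x)) :=
  fun a b h => by simpa [toLoop_fromLoop] using congrArg toLoop h
lemma toLoop_mul {x : X} (a b : FundamentalGroup X x) :
    toLoop (a * b) = (toLoop b).trans (toLoop a) := rfl
lemma fromLoop_trans {x : X} (a b : Path x x) :
    fromLoop ⟦a.trans b⟧ = fromLoop ⟦b⟧ * fromLoop ⟦a⟧ := by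
  rfl
lemma fromLoop_refl_eq_one {x : X} : fromLoop ⟦Path.refl x⟧ = (1 : FundamentalGroup X x) := by
  rw [← fromLoop_toLoop 1]; rfl
lemma fromLoop_symm {x : X} (a : Path x x) : fromLoop ⟦a.symm⟧ = (fromLoop ⟦a⟧)⁻¹ := by
  have : fromLoop ⟦a.symm⟧ * fromLoop ⟦a⟧ = 1 := by
    rw [← fromLoop_trans, ← fromLoop_refl_eq_one]
    exact congrArg fromLoop (Quotient.sound ⟨(Path.Homotopy.reflTransSymm a).symm⟩)
  exact eq_inv_of_mul_eq_one_left this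
lemma piMap_fromLoop (f : C(X, Y)) {x : X} (a : Path x x) :
    piMap f x (fromLoop ⟦a⟧) = fromLoop ⟦a.map f.continuous⟧ := by
  unfold piMap
  rfl

lemma IsSmall.mul {x : X} {a b : FundamentalGroup X x} (ha : IsSmall a) (hb : IsSmall b) :
    IsSmall (a * b) := by
  intro U hU
  obtain ⟨δa, hδa, ha'⟩ := ha U hU
  obtain ⟨δb, hδb, hb'⟩ := hb U hU
  refine ⟨δb.trans δa, fun t => ?_, by rw [fromLoop_trans, ha', hb']⟩
  rcases le_or_gt (t : ℝ) (1/2) with h | h <;> simp only [Path.trans_apply]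
  · rw [dif_pos h]; exact hδb _
  · rw [dif_neg (not_le.2 h)]; exact hδa _

lemma IsSmall.inv {x : X} {a : FundamentalGroup X x} (ha : IsSmall a) : IsSmall a⁻¹ := by
  intro U hU
  obtain ⟨δ, hδ, h⟩ := ha U hU
  exact ⟨δ.symm, fun t => hδ _, by rw [fromLoop_symm, h]⟩

lemma IsSmall.piMap' (f : C(X, Y)) {x : X} {γ : FundamentalGroup X x} (h : IsSmall γ) :
    IsSmall (piMap f x γ) := by
  intro U hU
  obtain ⟨δ, hδ, h'⟩ := h (f ⁻¹' U) (f.continuous.continuousAt.preimage_mem_nhds hU)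
  exact ⟨δ.map f.continuous, fun t => hδ t, by rw [← h', piMap_fromLoop]⟩

lemma lift_loop_of_mem_baseSet {p : C(E, X)} {F : Type*} [TopologicalSpace F]
    (T : Bundle.Trivialization F (⇑p)) {a : X} (δ : Path a a) (hδ : ∀ t, δ t ∈ T.baseSet)
    (y : E) (hy : p y = a) : ∃ δt : Path y y, ∀ t, p (δt t) = δ t := by
  have hmem : ∀ t, ((δ t, (T y).2) : X × F) ∈ T.target := fun t => by
    rw [T.target_eq]; exact ⟨hδ t, Set.mem_univ _⟩
  have hy' : y ∈ T.source := T.mem_source.2 (by rw [hy, ← δ.source]; exact hδ 0)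
  have hTy : (T y : X × F) = (δ 0, (T y).2) := by
    refine Prod.ext ?_ rfl
    rw [T.coe_fst hy', hy, δ.source]
  have hcont : Continuous fun t : unitInterval =>
      T.toOpenPartialHomeomorph.symm (δ t, (T y).2) :=
    T.toOpenPartialHomeomorph.continuousOn_symm.comp_continuous
      (by fun_prop) hmem
  have hsy : T.toOpenPartialHomeomorph.symm (δ 0, (T y).2) = y := by
    rw [← hTy]; exact T.toOpenPartialHomeomorph.left_inv hy'
  have hsy1 : T.toOpenPartialHomeomorph.symm (δ 1, (T y).2) = y := by
    rw [show (δ 1 : X) = δ 0 by rw [δ.source, δ.target], ← hTy]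
    exact T.toOpenPartialHomeomorph.left_inv hy'
  refine ⟨⟨⟨_, hcont⟩, hsy, hsy1⟩, fun t => ?_⟩
  exact T.proj_symm_apply (hmem t)

lemma isSmall_mem_range {p : C(E, X)} (hp : IsCoveringMap p) (e : E)
    {γ : FundamentalGroup X (p e)} (h : IsSmall γ) : γ ∈ Set.range (piMap p e) := by
  have hev := hp (p e)
  haveI : Nonempty (p ⁻¹' {p e}) := ⟨⟨e, rfl⟩⟩
  have hT := hev.mem_toTrivialization_baseSet
  obtain ⟨δ, hδ, hδγ⟩ := h _ (hev.toTrivialization.open_baseSet.mem_nhds hT)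
  obtain ⟨δt, hlift⟩ := lift_loop_of_mem_baseSet hev.toTrivialization δ hδ e rfl
  refine ⟨fromLoop ⟦δt⟧, ?_⟩
  rw [piMap_fromLoop, ← hδγ]
  congr 1
  apply Quotient.sound
  apply Quotient.exact
  congr 1
  ext t
  · exact hlift t

open unitInterval in
lemma IsCoveringMap.exists_lift {p : C(E, X)} (hp : IsCoveringMap p) {a b : X}
    (γ : Path a b) (e : E) (he : p e = a) :
    ∃ Γ : C(unitInterval, E), Γ 0 = e ∧ ∀ t, p (Γ t) = γ t := by
  obtain ⟨Γ, h1, h0⟩ := hp.exists_path_lifts γ.toContinuousMap e (by simp [he])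
  exact ⟨Γ, h0, fun t => congrFun h1 t⟩

lemma conj_small {p : C(E, X)} (hp : IsCoveringMap p)
    (hE : ∀ (e : E) (γ : FundamentalGroup E e), IsSmall γ) [PathConnectedSpace E] (xt : E)
    {s : FundamentalGroup X (p xt)} (hs : IsSmall s) (g : FundamentalGroup X (p xt)) :
    IsSmall (g⁻¹ * s * g) := by
  obtain ⟨g₀, hg₀⟩ := Quotient.exists_rep (toLoop g)
  have hg : fromLoop ⟦g₀⟧ = g := by rw [hg₀, fromLoop_toLoop]
  obtain ⟨Γ, hΓ0, hΓ⟩ := hp.exists_lift g₀ xt rfl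
  set y := Γ 1 with hy0
  have hy : p y = p xt := by rw [hΓ 1, g₀.target]
  set α : Path xt y := ⟨⟨Γ, Γ.continuous⟩, hΓ0, rfl⟩ with hα
  set c : Path y xt := PathConnectedSpace.somePath y xt with hc
  have hev := hp (p xt)
  haveI : Nonempty (p ⁻¹' {p xt}) := ⟨⟨xt, rfl⟩⟩
  obtain ⟨δ, hδ, hδs⟩ := hs _
    (hev.toTrivialization.open_baseSet.mem_nhds hev.mem_toTrivialization_baseSet)
  obtain ⟨δt, hlift⟩ := lift_loop_of_mem_baseSet hev.toTrivialization δ hδ y hy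
  set d₀ : Path (p xt) (p xt) := (c.map p.continuous).cast hy.symm rfl with hd₀
  have hd₀c : ∀ u, d₀ u = p (c u) := fun u => rfl
  set d : FundamentalGroup X (p xt) := fromLoop ⟦d₀⟧ with hd
  -- first small element : d * g
  have h1 : (α.trans c).map p.continuous = g₀.trans d₀ := by
    ext u
    simp only [Path.map_coe, Function.comp_apply, Path.trans_apply]
    split_ifs with h
    · exact hΓ _
    · rfl
  have hL : IsSmall (d * g) := by
    have := (hE xt (fromLoop ⟦α.trans c⟧)).piMap' p
    rwa [piMap_fromLoop, h1, fromLoop_trans, hg, ← hd] at this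
  -- second small element : d * s * d⁻¹
  have h2 : (c.symm.trans (δt.trans c)).map p.continuous = d₀.symm.trans (δ.trans d₀) := by
    ext u
    simp only [Path.map_coe, Function.comp_apply, Path.trans_apply, Path.symm_apply]
    split_ifs with h h'
    · rfl
    · exact hlift _
    · rfl
  have hN : IsSmall (d * s * d⁻¹) := by
    have := (hE xt (fromLoop ⟦c.symm.trans (δt.trans c)⟧)).piMap' p
    rwa [piMap_fromLoop, h2, fromLoop_trans, fromLoop_trans, fromLoop_symm, hδs, ← hd] at this
  have hgoal : g⁻¹ * s * g = (d * g)⁻¹ * (d * s * d⁻¹) * (d * g) := by group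
  rw [hgoal]
  exact (hL.inv.mul hN).mul hL

/-- if `p : X̃ → X` is a covering with `X̃` a small loop space and `p xt = x`,
then `p₋(π₁(X̃, xt))` is a normal subgroup of `π₁(X, x)`. -/
theorem range_piMap_normal_of_small_covering {E X : Type*} [TopologicalSpace E]
    [TopologicalSpace X] (p : C(E, X)) (hp : IsCoveringMap p) (hE : IsSmallLoopSpace E)
    (xt : E) :
    ∃ H : Subgroup (FundamentalGroup X (p xt)),
      H.Normal ∧ (H : Set (FundamentalGroup X (p xt))) = Set.range (piMap p xt) := by
  haveI : PathConnectedSpace E := hE.1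
  refine ⟨{ carrier := smallSet X (p xt)
            mul_mem' := fun ha hb => ha.mul hb
            one_mem' := fun U hU =>
              ⟨Path.refl _, fun _ => mem_of_mem_nhds hU, fromLoop_refl_eq_one⟩
            inv_mem' := fun h => h.inv }, ?_, ?_⟩
  · constructor
    intro n hn g
    have := conj_small hp hE.2.2 xt hn g⁻¹
    rwa [inv_inv] at this
  · ext γ
    constructor
    · exact fun h => isSmall_mem_range hp xt h
    · rintro ⟨β, rfl⟩
      exact (hE.2.2 xt β).piMap' p

end
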